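/- Gradient descent with the Rand-k-Temporal estimator on the quadratic objective converges linearly to the true optimum: if 0 < η ≤ min{ 1/(1 + 8α), p/2 }, then for every t ≥ 0, E[||w^{t+1} − w*||²] ≤ (1−η)^{t+1} · ( ||w^0 − w*||² + (1/n)·Σ_{i=1}^n ||∇F_i(w*)||² ), where the expectation is over the sparsification randomness in all rounds 0,…,t. -/

import Mathlib

open Finset

noncomputable section

/-- A size-`k` subset of the coordinate set `{1,…,d}`. -/
abbrev KSub (d k : ℕ) := {S : Finset (Fin d) // S.card = k}

/-- Sample space: each of the `n` nodes independently picks a uniformly random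
size-`k` subset of coordinates. -/
abbrev Omega (n d k : ℕ) := Fin n → KSub d k

/-- Expectation with respect to the uniform distribution on `Omega n d k`
(each `n`-tuple of `k`-subsets has probability `1 / C(d,k)^n`). -/
def Exp {n d k : ℕ} (f : Omega n d k → ℝ) : ℝ :=
  (∑ ω : Omega n d k, f ω) / (Fintype.card (Omega n d k) : ℝ)

/-- The sparsified vector of node `i`: `h_{ij} = x_{ij}` if `j ∈ S_i`, else `0`. -/
def spars {n d k : ℕ} (x : Fin n → Fin d → ℝ) (ω : Omega n d k) (i : Fin n) (j : Fin d) : ℝ :=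
  if j ∈ (ω i).1 then x i j else 0

/-- One round of gradient descent with the Rand-k-Temporal estimator on the
quadratic objective `Fᵢ(w) = ½‖w − eᵢ‖²` (so `∇Fᵢ(w) = w − eᵢ`): given the
round's random subsets `ωt` and the state `(w, b)` (global iterate and
server-side memories), produce the next state. -/
def step {n d k : ℕ} (e : Fin n → Fin d → ℝ) (η : ℝ) (ωt : Omega n d k)
    (st : (Fin d → ℝ) × (Fin n → Fin d → ℝ)) :
    (Fin d → ℝ) × (Fin n → Fin d → ℝ) :=
  (fun j => st.1 j - (η / (n : ℝ)) * ∑ i : Fin n,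
      (if j ∈ (ωt i).1 then
          st.2 i j + ((d : ℝ) / (k : ℝ)) * ((st.1 j - e i j) - st.2 i j)
        else st.2 i j),
   fun i j => if j ∈ (ωt i).1 then st.1 j - e i j else st.2 i j)

/-- The random process: `w⁰` given, `bᵢ⁰ = 0`, and each round applies `step`
with that round's fresh random subsets. `(proc e η w0 ω t).1 = wᵗ`. -/
def proc {n d k : ℕ} (e : Fin n → Fin d → ℝ) (η : ℝ) (w0 : Fin d → ℝ)
    (ω : ℕ → Omega n d k) : ℕ → (Fin d → ℝ) × (Fin n → Fin d → ℝ)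
  | 0 => (w0, fun _ _ => 0)
  | t + 1 => step e η (ω t) (proc e η w0 ω t)

def chi {d k : ℕ} (j : Fin d) (S : KSub d k) : ℝ := if j ∈ S.1 then 1 else 0

lemma KSub.nonempty {d k : ℕ} (hkd : k ≤ d) : Nonempty (KSub d k) := by
  obtain ⟨t, -, ht⟩ := Finset.exists_subset_card_eq (s := (Finset.univ : Finset (Fin d))) (n := k)
    (by simpa using hkd)
  exact ⟨⟨t, ht⟩⟩

/-- reindexing equiv on KSub from a permutation of coordinates -/
def kequiv {d k : ℕ} (π : Fin d ≃ Fin d) : KSub d k ≃ KSub d k where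
  toFun S := ⟨S.1.map π.toEmbedding, by rw [Finset.card_map]; exact S.2⟩
  invFun S := ⟨S.1.map π.symm.toEmbedding, by rw [Finset.card_map]; exact S.2⟩
  left_inv S := by
    ext a
    simp [Finset.mem_map_equiv]
  right_inv S := by
    ext a
    simp [Finset.mem_map_equiv]

lemma chi_sum {d k : ℕ} (hk : 1 ≤ k) (hkd : k ≤ d) (j : Fin d) :
    ∑ S : KSub d k, chi j S = ((k : ℝ) / d) * (Fintype.card (KSub d k)) := by
  classical
  set c : Fin d → ℕ := fun j => ∑ S : KSub d k, (if j ∈ S.1 then 1 else 0) with hc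
  have hsym : ∀ j j' : Fin d, c j = c j' := by
    intro j j'
    refine Fintype.sum_equiv (kequiv (Equiv.swap j j')) _ _ ?_
    intro S
    have : j' ∈ S.1.map (Equiv.swap j j').toEmbedding ↔ j ∈ S.1 := by
      rw [Finset.mem_map_equiv]
      simp [Equiv.swap_apply_right]
    simp only [kequiv, Equiv.coe_fn_mk, this]
  have hsum : ∑ j' : Fin d, c j' = k * Fintype.card (KSub d k) := by
    rw [Finset.sum_comm]
    have : ∀ S : KSub d k, ∑ j' : Fin d, (if j' ∈ S.1 then 1 else 0) = k := by
      intro S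
      rw [Finset.sum_ite_mem, Finset.univ_inter, Finset.sum_const, smul_eq_mul, mul_one, S.2]
    rw [Finset.sum_congr rfl fun S _ => this S, Finset.sum_const, smul_eq_mul,
      Finset.card_univ, mul_comm]
  have hdc : (d : ℕ) * c j = k * Fintype.card (KSub d k) := by
    rw [← hsum, Finset.sum_congr rfl fun j' _ => hsym j' j, Finset.sum_const, smul_eq_mul,
      Finset.card_univ, Fintype.card_fin]
  have hd0 : (d : ℝ) ≠ 0 := by
    have : 0 < d := lt_of_lt_of_le hk hkd
    positivity
  have hcast : (d : ℝ) * (c j : ℝ) = (k : ℝ) * (Fintype.card (KSub d k) : ℝ) := by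
    exact_mod_cast congrArg (Nat.cast : ℕ → ℝ) hdc
  have hchi : ∑ S : KSub d k, chi j S = (c j : ℝ) := by
    rw [hc]; push_cast; rfl
  rw [hchi, div_mul_eq_mul_div, eq_div_iff hd0]
  linarith [hcast]

lemma expProd {n d k : ℕ} (F : Fin n → KSub d k → ℝ) :
    ∑ ω : Omega n d k, ∏ i, F i (ω i) = ∏ i, ∑ S : KSub d k, F i S :=
  (Fintype.prod_sum F).symm

lemma cardOmega {n d k : ℕ} :
    (Fintype.card (Omega n d k) : ℝ) = (Fintype.card (KSub d k) : ℝ) ^ n := by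
  rw [Fintype.card_fun]; push_cast; simp

lemma chi_moment {n d k : ℕ} (hk : 1 ≤ k) (hkd : k ≤ d) (t : Finset (Fin n)) (j : Fin d) :
    ∑ ω : Omega n d k, ∏ i ∈ t, chi j (ω i)
      = ((k : ℝ) / d) ^ t.card * (Fintype.card (Omega n d k) : ℝ) := by
  classical
  have h1 : ∀ ω : Omega n d k, ∏ i ∈ t, chi j (ω i)
      = ∏ i : Fin n, (if i ∈ t then chi j (ω i) else 1) := by
    intro ω
    rw [Finset.prod_ite_mem, Finset.univ_inter]
  rw [Finset.sum_congr rfl fun ω _ => h1 ω,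
    expProd (fun i S => if i ∈ t then chi j S else 1)]
  have h2 : ∀ i : Fin n, (∑ S : KSub d k, if i ∈ t then chi j S else 1)
      = (if i ∈ t then ((k:ℝ)/d) else 1) * (Fintype.card (KSub d k) : ℝ) := by
    intro i
    split_ifs
    · exact chi_sum hk hkd j
    · simp [Finset.card_univ]
  rw [Finset.prod_congr rfl fun i _ => h2 i, Finset.prod_mul_distrib, Finset.prod_const,
    Finset.prod_ite_mem, Finset.univ_inter, Finset.prod_const, Finset.card_univ,
    Fintype.card_fin, cardOmega]

lemma exp_chi {n d k : ℕ} (hk : 1 ≤ k) (hkd : k ≤ d) (i : Fin n) (j : Fin d) :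
    ∑ ω : Omega n d k, chi j (ω i)
      = ((k : ℝ) / d) * (Fintype.card (Omega n d k) : ℝ) := by
  have := chi_moment hk hkd {i} j
  simpa using this

lemma exp_chi_pair {n d k : ℕ} (hk : 1 ≤ k) (hkd : k ≤ d) (i i' : Fin n) (j : Fin d) :
    ∑ ω : Omega n d k, chi j (ω i) * chi j (ω i')
      = (if i = i' then ((k:ℝ)/d) else ((k:ℝ)/d)^2) * (Fintype.card (Omega n d k) : ℝ) := by
  classical
  split_ifs with h
  · subst h
    have h1 : ∀ ω : Omega n d k, chi j (ω i) * chi j (ω i) = chi j (ω i) := by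
      intro ω; unfold chi; split_ifs <;> ring
    rw [Finset.sum_congr rfl fun ω _ => h1 ω]
    exact exp_chi hk hkd i j
  · have := chi_moment hk hkd {i, i'} j
    rw [Finset.sum_congr rfl (fun (ω : Omega n d k) _ => Finset.prod_pair (f := fun x => chi j (ω x)) h),
      Finset.card_pair h] at this
    exact this

lemma exp_ite {n d k : ℕ} (hk : 1 ≤ k) (hkd : k ≤ d) (i : Fin n) (j : Fin d) (A B : ℝ) :
    ∑ ω : Omega n d k, (if j ∈ (ω i).1 then A else B)
      = (((k:ℝ)/d) * A + (1 - (k:ℝ)/d) * B) * (Fintype.card (Omega n d k) : ℝ) := by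
  have h1 : ∀ ω : Omega n d k, (if j ∈ (ω i).1 then A else B) = B + chi j (ω i) * (A - B) := by
    intro ω; unfold chi; split_ifs <;> ring
  rw [Finset.sum_congr rfl fun ω _ => h1 ω, Finset.sum_add_distrib, Finset.sum_const,
    ← Finset.sum_mul, exp_chi hk hkd i j, Finset.card_univ, nsmul_eq_mul, cardOmega]
  ring

lemma Esum_w {n d k : ℕ} (hn : 1 ≤ n) (hk : 1 ≤ k) (hkd : k ≤ d)
    (e : Fin n → Fin d → ℝ) (η : ℝ) (wstar : Fin d → ℝ)
    (st : (Fin d → ℝ) × (Fin n → Fin d → ℝ)) (j : Fin d)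
    (hwsj : (wstar j) * n = ∑ i : Fin n, e i j) :
    ∑ ω : Omega n d k, ((step e η ω st).1 j - wstar j)^2
      = ((1-η)^2 * (st.1 j - wstar j)^2
          + η^2 * ((1/(n:ℝ)) * ((d:ℝ)/(k:ℝ) - 1))
            * ((1/(n:ℝ)) * ∑ i : Fin n, (st.1 j - e i j - st.2 i j)^2))
        * (Fintype.card (Omega n d k) : ℝ) := by
  classical
  have hd0 : (0:ℝ) < d := by exact_mod_cast lt_of_lt_of_le hk hkd
  have hk0 : (0:ℝ) < k := by exact_mod_cast hk
  have hn0 : (0:ℝ) < n := by exact_mod_cast hn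
  set p : ℝ := (k:ℝ)/d with hpdef
  set q : ℝ := (d:ℝ)/k with hqdef
  have hp0 : p ≠ 0 := by positivity
  have hq : q = 1/p := by rw [hpdef, hqdef]; field_simp
  set N : ℝ := (n:ℝ) with hNdef
  set CΩ : ℝ := (Fintype.card (Omega n d k) : ℝ) with hCdef
  set u : ℝ := st.1 j - wstar j with hudef
  set Δ : Fin n → ℝ := fun i => st.1 j - e i j - st.2 i j with hΔdef
  set C : ℝ := u - (η/N) * ∑ i : Fin n, st.2 i j with hCdef2
  set Y : Omega n d k → ℝ := fun ω => ∑ i : Fin n, chi j (ω i) * Δ i with hYdef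
  set S₁ : ℝ := ∑ i : Fin n, Δ i with hS1
  set S₂ : ℝ := ∑ i : Fin n, (Δ i)^2 with hS2
  -- step 1: rewrite the iterate
  have hstep : ∀ ω : Omega n d k, (step e η ω st).1 j - wstar j = C - (η/N) * (q * Y ω) := by
    intro ω
    have h1 : ∀ i : Fin n, (if j ∈ (ω i).1 then
          st.2 i j + q * ((st.1 j - e i j) - st.2 i j) else st.2 i j)
        = st.2 i j + chi j (ω i) * (q * Δ i) := by
      intro i; unfold chi; rw [hΔdef]; split_ifs <;> ring
    have h2 : ∑ i : Fin n, chi j (ω i) * (q * Δ i) = q * Y ω := by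
      rw [hYdef, Finset.mul_sum]
      exact Finset.sum_congr rfl fun i _ => by ring
    show st.1 j - (η/N) * (∑ i : Fin n, _) - wstar j = _
    rw [Finset.sum_congr rfl fun i _ => h1 i, Finset.sum_add_distrib, h2, hCdef2, hudef]
    ring
  -- first moment of Y
  have hY1 : ∑ ω : Omega n d k, Y ω = p * S₁ * CΩ := by
    rw [hYdef, Finset.sum_comm, hS1, Finset.mul_sum, Finset.sum_mul]
    refine Finset.sum_congr rfl fun i _ => ?_
    rw [← Finset.sum_mul, exp_chi hk hkd i j]
    ring
  -- second moment of Y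
  have hY2 : ∑ ω : Omega n d k, (Y ω)^2 = (p * S₂ + p^2 * (S₁^2 - S₂)) * CΩ := by
    have hexp : ∀ ω : Omega n d k, (Y ω)^2
        = ∑ i : Fin n, ∑ i' : Fin n, (Δ i * Δ i') * (chi j (ω i) * chi j (ω i')) := by
      intro ω
      rw [hYdef, sq, Finset.sum_mul_sum]
      exact Finset.sum_congr rfl fun i _ => Finset.sum_congr rfl fun i' _ => by ring
    rw [Finset.sum_congr rfl fun ω _ => hexp ω, Finset.sum_comm]
    have hin : ∀ i : Fin n,
        ∑ ω : Omega n d k, ∑ i' : Fin n, (Δ i * Δ i') * (chi j (ω i) * chi j (ω i'))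
        = ∑ i' : Fin n, (Δ i * Δ i') * ((if i = i' then p else p^2) * CΩ) := by
      intro i
      rw [Finset.sum_comm]
      refine Finset.sum_congr rfl fun i' _ => ?_
      rw [← Finset.mul_sum, exp_chi_pair hk hkd i i' j]
    rw [Finset.sum_congr rfl fun i _ => hin i]
    have hsplit : ∀ i : Fin n,
        ∑ i' : Fin n, (Δ i * Δ i') * ((if i = i' then p else p^2) * CΩ)
        = (∑ i' : Fin n, (Δ i * Δ i') * (p^2 * CΩ)) + (p - p^2) * CΩ * (Δ i)^2 := by
      intro i
      have : ∀ i' : Fin n, (Δ i * Δ i') * ((if i = i' then p else p^2) * CΩ)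
          = (Δ i * Δ i') * (p^2 * CΩ)
            + (if i = i' then (p - p^2) * CΩ * (Δ i * Δ i') else 0) := by
        intro i'; split_ifs <;> ring
      rw [Finset.sum_congr rfl fun i' _ => this i', Finset.sum_add_distrib,
        Finset.sum_ite_eq Finset.univ i (fun i' => (p - p^2) * CΩ * (Δ i * Δ i'))]
      simp [sq]
    rw [Finset.sum_congr rfl fun i _ => hsplit i, Finset.sum_add_distrib]
    have h1 : ∑ i : Fin n, ∑ i' : Fin n, (Δ i * Δ i') * (p^2 * CΩ) = p^2 * CΩ * S₁^2 := by
      rw [hS1, sq (∑ i : Fin n, Δ i), Finset.sum_mul_sum, Finset.mul_sum]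
      refine Finset.sum_congr rfl fun i _ => ?_
      rw [Finset.mul_sum]
      exact Finset.sum_congr rfl fun i' _ => by ring
    have h2 : ∑ i : Fin n, (p - p^2) * CΩ * (Δ i)^2 = (p - p^2) * CΩ * S₂ := by
      rw [hS2, Finset.mul_sum]
    rw [h1, h2]
    ring
  -- expand the square
  have hsq : ∑ ω : Omega n d k, ((step e η ω st).1 j - wstar j)^2
      = CΩ * C^2 - 2 * (η/N) * q * C * (∑ ω : Omega n d k, Y ω)
        + (η/N)^2 * q^2 * (∑ ω : Omega n d k, (Y ω)^2) := by
    have : ∀ ω : Omega n d k, ((step e η ω st).1 j - wstar j)^2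
        = C^2 - 2 * (η/N) * q * C * Y ω + (η/N)^2 * q^2 * (Y ω)^2 := by
      intro ω; rw [hstep ω]; ring
    rw [Finset.sum_congr rfl fun ω _ => this ω, Finset.sum_add_distrib,
      Finset.sum_sub_distrib, Finset.sum_const, ← Finset.mul_sum, ← Finset.mul_sum,
      Finset.card_univ, nsmul_eq_mul, hCdef]
  -- key cancellation
  have hkey : C - (η/N) * S₁ = (1-η) * u := by
    rw [hCdef2, hS1, hΔdef, hudef]
    have hsum : ∑ i : Fin n, (st.1 j - e i j - st.2 i j)
        = N * st.1 j - wstar j * N - ∑ i : Fin n, st.2 i j := by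
      rw [Finset.sum_sub_distrib, Finset.sum_sub_distrib, Finset.sum_const, hwsj,
        Finset.card_univ, Fintype.card_fin, nsmul_eq_mul, hNdef]
    rw [hsum]
    field_simp
    ring
  rw [hsq, hY1, hY2, hq]
  have hC : C = (1-η) * u + (η/N) * S₁ := by linarith [hkey]
  rw [hC]
  have hN0 : N ≠ 0 := by positivity
  field_simp
  ring

lemma Esum_b {n d k : ℕ} (hk : 1 ≤ k) (hkd : k ≤ d)
    (e : Fin n → Fin d → ℝ) (η : ℝ) (wstar : Fin d → ℝ)
    (st : (Fin d → ℝ) × (Fin n → Fin d → ℝ)) (i : Fin n) (j : Fin d) :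
    ∑ ω : Omega n d k, ((step e η ω st).2 i j - (wstar j - e i j))^2
      = (((k:ℝ)/d) * (st.1 j - wstar j)^2
          + (1 - (k:ℝ)/d) * (st.2 i j - (wstar j - e i j))^2)
        * (Fintype.card (Omega n d k) : ℝ) := by
  have h1 : ∀ ω : Omega n d k, ((step e η ω st).2 i j - (wstar j - e i j))^2
      = if j ∈ (ω i).1 then (st.1 j - wstar j)^2 else (st.2 i j - (wstar j - e i j))^2 := by
    intro ω
    show ((if j ∈ (ω i).1 then st.1 j - e i j else st.2 i j) - (wstar j - e i j))^2 = _
    split_ifs <;> ring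
  rw [Finset.sum_congr rfl fun ω _ => h1 ω, exp_ite hk hkd i j]

def Uq {n d : ℕ} (wstar : Fin d → ℝ) (st : (Fin d → ℝ) × (Fin n → Fin d → ℝ)) : ℝ :=
  ∑ j : Fin d, (st.1 j - wstar j)^2

def Gq {n d : ℕ} (e : Fin n → Fin d → ℝ) (wstar : Fin d → ℝ)
    (st : (Fin d → ℝ) × (Fin n → Fin d → ℝ)) : ℝ :=
  (1/(n:ℝ)) * ∑ i : Fin n, ∑ j : Fin d, (st.2 i j - (wstar j - e i j))^2

lemma Uq_nonneg {n d : ℕ} (wstar : Fin d → ℝ) (st) : 0 ≤ Uq (n := n) wstar st :=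
  Finset.sum_nonneg fun _ _ => sq_nonneg _

lemma Gq_nonneg {n d : ℕ} (e : Fin n → Fin d → ℝ) (wstar : Fin d → ℝ) (st) :
    0 ≤ Gq e wstar st := by
  unfold Gq
  have : (0:ℝ) ≤ ∑ i : Fin n, ∑ j : Fin d, (st.2 i j - (wstar j - e i j))^2 :=
    Finset.sum_nonneg fun _ _ => Finset.sum_nonneg fun _ _ => sq_nonneg _
  positivity

lemma Esum_U {n d k : ℕ} (hn : 1 ≤ n) (hk : 1 ≤ k) (hkd : k ≤ d)
    (e : Fin n → Fin d → ℝ) (η : ℝ) (wstar : Fin d → ℝ)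
    (st : (Fin d → ℝ) × (Fin n → Fin d → ℝ))
    (hws : ∀ j, (wstar j) * n = ∑ i : Fin n, e i j) :
    ∑ ω : Omega n d k, Uq wstar (step e η ω st)
      = ((1-η)^2 * Uq wstar st
          + η^2 * ((1/(n:ℝ)) * ((d:ℝ)/(k:ℝ) - 1))
            * ((1/(n:ℝ)) * ∑ i : Fin n, ∑ j : Fin d, (st.1 j - e i j - st.2 i j)^2))
        * (Fintype.card (Omega n d k) : ℝ) := by
  unfold Uq
  rw [Finset.sum_comm, Finset.sum_congr rfl fun j _ => Esum_w hn hk hkd e η wstar st j (hws j),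
    ← Finset.sum_mul]
  congr 1
  rw [Finset.sum_add_distrib, ← Finset.mul_sum, ← Finset.mul_sum, ← Finset.mul_sum]
  congr 3
  exact Finset.sum_comm

lemma Esum_G {n d k : ℕ} (hn : 1 ≤ n) (hk : 1 ≤ k) (hkd : k ≤ d)
    (e : Fin n → Fin d → ℝ) (η : ℝ) (wstar : Fin d → ℝ)
    (st : (Fin d → ℝ) × (Fin n → Fin d → ℝ)) :
    ∑ ω : Omega n d k, Gq e wstar (step e η ω st)
      = (((k:ℝ)/d) * Uq wstar st + (1 - (k:ℝ)/d) * Gq e wstar st)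
        * (Fintype.card (Omega n d k) : ℝ) := by
  unfold Gq
  rw [← Finset.mul_sum, Finset.sum_comm]
  rw [Finset.sum_congr rfl fun (i : Fin n) _ =>
    (Finset.sum_comm (s := (Finset.univ : Finset (Omega n d k)))
      (t := (Finset.univ : Finset (Fin d)))
      (f := fun ω j => ((step e η ω st).2 i j - (wstar j - e i j))^2))]
  rw [Finset.sum_congr rfl fun i _ => Finset.sum_congr rfl fun j _ =>
    Esum_b (n := n) hk hkd e η wstar st i j]
  have h1 : ∀ i : Fin n, ∑ j : Fin d,
      (((k:ℝ)/d) * (st.1 j - wstar j)^2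
        + (1 - (k:ℝ)/d) * (st.2 i j - (wstar j - e i j))^2)
        * (Fintype.card (Omega n d k) : ℝ)
      = (((k:ℝ)/d) * Uq wstar st
          + (1 - (k:ℝ)/d) * ∑ j : Fin d, (st.2 i j - (wstar j - e i j))^2)
        * (Fintype.card (Omega n d k) : ℝ) := by
    intro i
    rw [← Finset.sum_mul]
    congr 1
    rw [Finset.sum_add_distrib, ← Finset.mul_sum, ← Finset.mul_sum]
    rfl
  rw [Finset.sum_congr rfl fun i _ => h1 i]
  rw [← Finset.sum_mul, Finset.sum_add_distrib, Finset.sum_const, ← Finset.mul_sum,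
    Finset.card_univ, Fintype.card_fin, nsmul_eq_mul]
  have hn0 : (n:ℝ) ≠ 0 := by
    have : 0 < n := hn; positivity
  field_simp

set_option maxHeartbeats 2000000 in
lemma step_contract {n d k : ℕ} (hn : 1 ≤ n) (hk : 1 ≤ k) (hkd : k ≤ d)
    (e : Fin n → Fin d → ℝ) (η : ℝ) (wstar : Fin d → ℝ)
    (hws : ∀ j, (wstar j) * n = ∑ i : Fin n, e i j)
    (p α β : ℝ) (hp : p = (k:ℝ)/(d:ℝ)) (hα : α = (1/(n:ℝ)) * ((d:ℝ)/(k:ℝ) - 1))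
    (hβ : β = 4*η^2*α/p)
    (hη0 : 0 < η) (hη1 : η*(1+8*α) ≤ 1) (hη2 : 2*η ≤ p)
    (st : (Fin d → ℝ) × (Fin n → Fin d → ℝ)) :
    ∑ ω : Omega n d k, (Uq wstar (step e η ω st) + β * Gq e wstar (step e η ω st))
      ≤ (1-η) * (Uq wstar st + β * Gq e wstar st) * (Fintype.card (Omega n d k) : ℝ) := by
  have hd0 : (0:ℝ) < d := by exact_mod_cast lt_of_lt_of_le hk hkd
  have hk0 : (0:ℝ) < k := by exact_mod_cast hk
  have hn0 : (0:ℝ) < n := by exact_mod_cast hn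
  have hkdR : (k:ℝ) ≤ (d:ℝ) := by exact_mod_cast hkd
  have hp0 : 0 < p := by rw [hp]; positivity
  have hp1 : p ≤ 1 := by rw [hp, div_le_one hd0]; exact hkdR
  have hα0 : 0 ≤ α := by
    rw [hα]
    have h1 : (1:ℝ) ≤ (d:ℝ)/(k:ℝ) := by rw [le_div_iff₀ hk0]; linarith
    have h2 : (0:ℝ) < 1/(n:ℝ) := by positivity
    nlinarith
  have hβ0 : 0 ≤ β := by rw [hβ]; positivity
  have hβp : β * p = 4*η^2*α := by rw [hβ]; field_simp
  have hA : (1-η)^2 + β*p + 2*η^2*α ≤ 1-η := by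
    have h6 : η*(1+6*α) ≤ 1 := by nlinarith [mul_nonneg hη0.le hα0]
    nlinarith [hβp, mul_le_mul_of_nonneg_left h6 hη0.le]
  have hB : 2*η^2*α + β*(1-p) ≤ (1-η)*β := by
    nlinarith [mul_le_mul_of_nonneg_left hη2 hβ0, hβp]
  -- rewrite sums exactly
  rw [Finset.sum_add_distrib, ← Finset.mul_sum,
    Esum_U hn hk hkd e η wstar st hws, Esum_G hn hk hkd e η wstar st]
  set SU : ℝ := Uq wstar st with hSU
  set G' : ℝ := Gq e wstar st with hG'
  set D' : ℝ := (1/(n:ℝ)) * ∑ i : Fin n, ∑ j : Fin d, (st.1 j - e i j - st.2 i j)^2 with hD'def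
  have hSU0 : 0 ≤ SU := Uq_nonneg wstar st
  have hG0 : 0 ≤ G' := Gq_nonneg e wstar st
  -- D' ≤ 2 SU + 2 G'
  have hD : D' ≤ 2*SU + 2*G' := by
    have hptw : ∀ i : Fin n, ∀ j : Fin d, (st.1 j - e i j - st.2 i j)^2
        ≤ 2*(st.1 j - wstar j)^2 + 2*(st.2 i j - (wstar j - e i j))^2 := by
      intro i j
      nlinarith [sq_nonneg (st.1 j - wstar j + (st.2 i j - (wstar j - e i j)))]
    have hsum : ∑ i : Fin n, ∑ j : Fin d, (st.1 j - e i j - st.2 i j)^2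
        ≤ ∑ i : Fin n, ∑ j : Fin d,
            (2*(st.1 j - wstar j)^2 + 2*(st.2 i j - (wstar j - e i j))^2) :=
      Finset.sum_le_sum fun i _ => Finset.sum_le_sum fun j _ => hptw i j
    have heq : ∑ i : Fin n, ∑ j : Fin d,
        (2*(st.1 j - wstar j)^2 + 2*(st.2 i j - (wstar j - e i j))^2)
        = (n:ℝ) * (2*SU) + 2 * ∑ i : Fin n, ∑ j : Fin d,
            (st.2 i j - (wstar j - e i j))^2 := by
      have h1 : ∀ i : Fin n, ∑ j : Fin d,
          (2*(st.1 j - wstar j)^2 + 2*(st.2 i j - (wstar j - e i j))^2)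
          = 2*SU + 2*∑ j : Fin d, (st.2 i j - (wstar j - e i j))^2 := by
        intro i
        rw [Finset.sum_add_distrib, ← Finset.mul_sum, ← Finset.mul_sum, hSU]
        rfl
      rw [Finset.sum_congr rfl fun i _ => h1 i, Finset.sum_add_distrib, Finset.sum_const,
        Finset.card_univ, Fintype.card_fin, nsmul_eq_mul, ← Finset.mul_sum]
    rw [hD'def]
    have h2 : (1/(n:ℝ)) * ∑ i : Fin n, ∑ j : Fin d, (st.1 j - e i j - st.2 i j)^2
        ≤ (1/(n:ℝ)) * ((n:ℝ) * (2*SU) + 2 * ∑ i : Fin n, ∑ j : Fin d,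
            (st.2 i j - (wstar j - e i j))^2) := by
      rw [← heq]
      exact mul_le_mul_of_nonneg_left hsum (by positivity)
    have h3 : (1/(n:ℝ)) * ((n:ℝ) * (2*SU) + 2 * ∑ i : Fin n, ∑ j : Fin d,
        (st.2 i j - (wstar j - e i j))^2) = 2*SU + 2*G' := by
      rw [hG']
      unfold Gq
      field_simp
    linarith [h2, h3.symm.le]
  -- conclude
  have hinner : (1-η)^2 * SU + η^2*α*D' + β * (p*SU + (1-p)*G')
      ≤ (1-η) * (SU + β*G') := by
    have hηα : 0 ≤ η^2*α := by positivity
    calc (1-η)^2 * SU + η^2*α*D' + β * (p*SU + (1-p)*G')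
        ≤ (1-η)^2 * SU + η^2*α*(2*SU + 2*G') + β * (p*SU + (1-p)*G') := by
          linarith [mul_le_mul_of_nonneg_left hD hηα]
      _ = ((1-η)^2 + β*p + 2*η^2*α)*SU + (2*η^2*α + β*(1-p))*G' := by ring
      _ ≤ (1-η)*SU + ((1-η)*β)*G' :=
          add_le_add (mul_le_mul_of_nonneg_right hA hSU0)
            (mul_le_mul_of_nonneg_right hB hG0)
      _ = (1-η) * (SU + β*G') := by ring
  have hC0 : (0:ℝ) ≤ (Fintype.card (Omega n d k) : ℝ) := Nat.cast_nonneg _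
  have := mul_le_mul_of_nonneg_right hinner hC0
  have hαrw : (1/(n:ℝ)) * ((d:ℝ)/(k:ℝ) - 1) = α := hα.symm
  have hprw : (k:ℝ)/(d:ℝ) = p := hp.symm
  rw [hαrw, hprw]
  calc ((1-η)^2*SU + η^2*α*D') * (Fintype.card (Omega n d k) : ℝ)
        + β * ((p*SU + (1-p)*G') * (Fintype.card (Omega n d k) : ℝ))
      = ((1-η)^2 * SU + η^2*α*D' + β * (p*SU + (1-p)*G'))
          * (Fintype.card (Omega n d k) : ℝ) := by ring
    _ ≤ (1-η) * (SU + β*G') * (Fintype.card (Omega n d k) : ℝ) := this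

lemma proc_congr {n d k : ℕ} (e : Fin n → Fin d → ℝ) (η : ℝ) (w0 : Fin d → ℝ) :
    ∀ (T : ℕ) (ω1 ω2 : ℕ → Omega n d k), (∀ m, m < T → ω1 m = ω2 m) →
      proc e η w0 ω1 T = proc e η w0 ω2 T := by
  intro T
  induction T with
  | zero => intro ω1 ω2 _; rfl
  | succ t ih =>
      intro ω1 ω2 h
      show step e η (ω1 t) _ = step e η (ω2 t) _
      rw [ih ω1 ω2 (fun m hm => h m (Nat.lt_succ_of_lt hm)), h t (Nat.lt_succ_self t)]

def extend {n d k T : ℕ} (hne : Nonempty (KSub d k)) (ω : Fin T → Omega n d k) :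
    ℕ → Omega n d k :=
  fun m => if h : m < T then ω ⟨m, h⟩ else fun _ => Classical.choice hne

lemma main_bound {n d k : ℕ} (hn : 1 ≤ n) (hk : 1 ≤ k) (hkd : k ≤ d)
    (e : Fin n → Fin d → ℝ) (η : ℝ) (w0 : Fin d → ℝ) (wstar : Fin d → ℝ)
    (hws : ∀ j, (wstar j) * n = ∑ i : Fin n, e i j)
    (p α β : ℝ) (hp : p = (k:ℝ)/(d:ℝ)) (hα : α = (1/(n:ℝ)) * ((d:ℝ)/(k:ℝ) - 1))
    (hβ : β = 4*η^2*α/p)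
    (hη0 : 0 < η) (hη1 : η*(1+8*α) ≤ 1) (hη2 : 2*η ≤ p) (hηle : η ≤ 1)
    (hne : Nonempty (KSub d k)) :
    ∀ T : ℕ,
      ∑ ω : Fin T → Omega n d k,
        (Uq wstar (proc e η w0 (extend hne ω) T)
          + β * Gq e wstar (proc e η w0 (extend hne ω) T))
      ≤ (Fintype.card (Omega n d k) : ℝ)^T * (1-η)^T
          * (Uq wstar ((w0, fun _ _ => 0) : (Fin d → ℝ) × (Fin n → Fin d → ℝ))
            + β * Gq e wstar ((w0, fun _ _ => 0) : (Fin d → ℝ) × (Fin n → Fin d → ℝ))) := by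
  intro T
  induction T with
  | zero =>
      rw [Fintype.sum_unique]
      simp only [pow_zero, one_mul]
      exact le_of_eq rfl
  | succ T ih =>
      set F : (Fin (T+1) → Omega n d k) → ℝ := fun ω =>
        Uq wstar (proc e η w0 (extend hne ω) (T+1))
          + β * Gq e wstar (proc e η w0 (extend hne ω) (T+1)) with hF
      set E := Fin.insertNthEquiv (fun _ : Fin (T+1) => Omega n d k) (Fin.last T) with hE
      have hkey : ∀ (s : Omega n d k) (ω' : Fin T → Omega n d k),
          proc e η w0 (extend hne (E (s, ω'))) (T+1)
            = step e η s (proc e η w0 (extend hne ω') T) := by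
        intro s ω'
        show step e η (extend hne (E (s, ω')) T) _ = _
        have h1 : extend hne (E (s, ω')) T = s := by
          unfold extend
          rw [dif_pos (Nat.lt_succ_self T)]
          have : (⟨T, Nat.lt_succ_self T⟩ : Fin (T+1)) = Fin.last T := rfl
          rw [this, hE]
          simp [Fin.insertNthEquiv]
        have h2 : proc e η w0 (extend hne (E (s, ω'))) T
            = proc e η w0 (extend hne ω') T := by
          apply proc_congr
          intro m hm
          unfold extend
          rw [dif_pos (Nat.lt_succ_of_lt hm), dif_pos hm]
          have hcast : (⟨m, Nat.lt_succ_of_lt hm⟩ : Fin (T+1))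
              = Fin.castSucc ⟨m, hm⟩ := rfl
          rw [hE]
          show (Fin.insertNthEquiv (fun _ : Fin (T+1) => Omega n d k) (Fin.last T)
            (s, ω')) _ = _
          simp only [Fin.insertNthEquiv, Equiv.coe_fn_mk, Fin.insertNth_last']
          have hc2 : (⟨m, Nat.lt_succ_of_lt hm⟩ : Fin (T+1)) = Fin.castSucc ⟨m, hm⟩ := rfl
          rw [hc2, Fin.snoc_castSucc]
        rw [h1, h2]
      have hcontract := fun (ω' : Fin T → Omega n d k) =>
        step_contract hn hk hkd e η wstar hws p α β hp hα hβ hη0 hη1 hη2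
          (proc e η w0 (extend hne ω') T)
      have hCη0 : (0:ℝ) ≤ (1-η) * (Fintype.card (Omega n d k) : ℝ) := by
        have : (0:ℝ) ≤ 1 - η := by linarith
        positivity
      calc ∑ ω : Fin (T+1) → Omega n d k, F ω
          = ∑ x : Omega n d k × (Fin T → Omega n d k), F (E x) :=
            (Equiv.sum_comp E F).symm
        _ = ∑ s : Omega n d k, ∑ ω' : Fin T → Omega n d k, F (E (s, ω')) :=
            Fintype.sum_prod_type _
        _ = ∑ ω' : Fin T → Omega n d k, ∑ s : Omega n d k,
              (Uq wstar (step e η s (proc e η w0 (extend hne ω') T))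
                + β * Gq e wstar (step e η s (proc e η w0 (extend hne ω') T))) := by
            rw [Finset.sum_comm]
            exact Finset.sum_congr rfl fun ω' _ => Finset.sum_congr rfl fun s _ => by
              rw [hF]; simp only []; rw [hkey s ω']
        _ ≤ ∑ ω' : Fin T → Omega n d k,
              ((1-η) * (Fintype.card (Omega n d k) : ℝ))
                * (Uq wstar (proc e η w0 (extend hne ω') T)
                   + β * Gq e wstar (proc e η w0 (extend hne ω') T)) := by
            refine Finset.sum_le_sum fun ω' _ => ?_
            have := hcontract ω'
            linarith [this]
        _ = ((1-η) * (Fintype.card (Omega n d k) : ℝ))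
              * ∑ ω' : Fin T → Omega n d k,
                (Uq wstar (proc e η w0 (extend hne ω') T)
                  + β * Gq e wstar (proc e η w0 (extend hne ω') T)) := by
            rw [Finset.mul_sum]
        _ ≤ ((1-η) * (Fintype.card (Omega n d k) : ℝ))
              * ((Fintype.card (Omega n d k) : ℝ)^T * (1-η)^T
                 * (Uq wstar (w0, fun _ _ => 0) + β * Gq e wstar (w0, fun _ _ => 0))) :=
            mul_le_mul_of_nonneg_left ih hCη0
        _ = (Fintype.card (Omega n d k) : ℝ)^(T+1) * (1-η)^(T+1)
              * (Uq wstar (w0, fun _ _ => 0) + β * Gq e wstar (w0, fun _ _ => 0)) := by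
            ring

set_option maxHeartbeats 1600000 in
/-- linear convergence of GD with Rand-k-Temporal:
if `0 < η ≤ min{1/(1+8α), p/2}` with `p = k/d` and `α = (1/n)(d/k − 1)`, then
for all `t`, `E[‖w^{t+1} − w*‖²] ≤ (1−η)^{t+1}(‖w⁰ − w*‖² + (1/n)Σᵢ‖∇Fᵢ(w*)‖²)`,
the expectation being over the i.i.d. sparsification randomness of rounds
`0,…,t`. -/
theorem temporal_gd_convergence (n d k : ℕ) (hn : 1 ≤ n) (hk : 1 ≤ k) (hkd : k ≤ d)
    (e : Fin n → Fin d → ℝ) (w0 : Fin d → ℝ) (η p α : ℝ)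
    (hp : p = (k : ℝ) / (d : ℝ))
    (hα : α = (1 / (n : ℝ)) * ((d : ℝ) / (k : ℝ) - 1))
    (wstar : Fin d → ℝ) (hws : wstar = fun j => (1 / (n : ℝ)) * ∑ i : Fin n, e i j)
    (hη0 : 0 < η) (hη : η ≤ min (1 / (1 + 8 * α)) (p / 2)) :
    ∀ t : ℕ,
      (∑ ω : Fin (t + 1) → Omega n d k,
          ∑ j : Fin d,
            ((proc e η w0
                (fun m => ω ⟨m % (t + 1), Nat.mod_lt m (Nat.succ_pos t)⟩)
                (t + 1)).1 j - wstar j) ^ 2)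
          / (Fintype.card (Fin (t + 1) → Omega n d k) : ℝ)
        ≤ (1 - η) ^ (t + 1)
            * (∑ j : Fin d, (w0 j - wstar j) ^ 2
              + (1 / (n : ℝ)) * ∑ i : Fin n, ∑ j : Fin d, (wstar j - e i j) ^ 2) := by
  intro t
  classical
  have hd : 1 ≤ d := le_trans hk hkd
  have hne : Nonempty (KSub d k) := KSub.nonempty hkd
  haveI hneΩ : Nonempty (Omega n d k) := ⟨fun _ => Classical.choice hne⟩
  have hd0 : (0:ℝ) < d := by exact_mod_cast lt_of_lt_of_le hk hkd
  have hk0 : (0:ℝ) < k := by exact_mod_cast hk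
  have hn0 : (0:ℝ) < n := by exact_mod_cast hn
  have hkdR : (k:ℝ) ≤ (d:ℝ) := by exact_mod_cast hkd
  have hp0 : 0 < p := by rw [hp]; positivity
  have hα0 : 0 ≤ α := by
    rw [hα]
    have h1 : (1:ℝ) ≤ (d:ℝ)/(k:ℝ) := by rw [le_div_iff₀ hk0]; linarith
    have h2 : (0:ℝ) < 1/(n:ℝ) := by positivity
    nlinarith
  have h8 : (0:ℝ) < 1 + 8*α := by linarith
  have hη1' : η * (1 + 8*α) ≤ 1 := by
    have := le_trans hη (min_le_left _ _)
    calc η * (1 + 8*α) ≤ (1/(1+8*α)) * (1+8*α) :=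
          mul_le_mul_of_nonneg_right this (le_of_lt h8)
      _ = 1 := by field_simp
  have hη2 : 2*η ≤ p := by
    have := le_trans hη (min_le_right _ _)
    linarith
  have hηle : η ≤ 1 := by nlinarith [mul_nonneg hη0.le hα0]
  have hws' : ∀ j, (wstar j) * n = ∑ i : Fin n, e i j := by
    intro j
    rw [hws]
    field_simp
  set β : ℝ := 4*η^2*α/p with hβ
  have hβ0 : 0 ≤ β := by rw [hβ]; positivity
  have hβ1 : β ≤ 1 := by
    rw [hβ, div_le_one hp0]
    nlinarith [mul_nonneg hη0.le hα0, hη1', hη2]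
  have hmb := main_bound hn hk hkd e η w0 wstar hws' p α β hp hα hβ
    hη0 hη1' hη2 hηle hne (t+1)
  have hagree : ∀ ω : Fin (t+1) → Omega n d k,
      proc e η w0 (fun m => ω ⟨m % (t + 1), Nat.mod_lt m (Nat.succ_pos t)⟩) (t+1)
        = proc e η w0 (extend hne ω) (t+1) := by
    intro ω
    apply proc_congr
    intro m hm
    unfold extend
    rw [dif_pos hm]
    exact congrArg ω (Fin.ext (by simpa using Nat.mod_eq_of_lt hm))
  have hS1 : ∑ ω : Fin (t+1) → Omega n d k,
      ∑ j : Fin d, ((proc e η w0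
          (fun m => ω ⟨m % (t + 1), Nat.mod_lt m (Nat.succ_pos t)⟩) (t+1)).1 j - wstar j)^2
      = ∑ ω : Fin (t+1) → Omega n d k, Uq wstar (proc e η w0 (extend hne ω) (t+1)) := by
    refine Finset.sum_congr rfl fun ω _ => ?_
    rw [hagree ω]
    rfl
  have hS2 : ∑ ω : Fin (t+1) → Omega n d k, Uq wstar (proc e η w0 (extend hne ω) (t+1))
      ≤ ∑ ω : Fin (t+1) → Omega n d k,
        (Uq wstar (proc e η w0 (extend hne ω) (t+1))
          + β * Gq e wstar (proc e η w0 (extend hne ω) (t+1))) := by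
    refine Finset.sum_le_sum fun ω _ => ?_
    have := Gq_nonneg e wstar (proc e η w0 (extend hne ω) (t+1))
    linarith [mul_nonneg hβ0 this]
  have hG0eq : Gq e wstar ((w0, fun _ _ => 0) : (Fin d → ℝ) × (Fin n → Fin d → ℝ))
      = (1/(n:ℝ)) * ∑ i : Fin n, ∑ j : Fin d, (wstar j - e i j)^2 := by
    unfold Gq
    congr 1
    refine Finset.sum_congr rfl fun i _ => Finset.sum_congr rfl fun j _ => ?_
    ring
  have hG00 : 0 ≤ Gq e wstar ((w0, fun _ _ => 0) : (Fin d → ℝ) × (Fin n → Fin d → ℝ)) :=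
    Gq_nonneg e wstar _
  have hU0eq : Uq wstar ((w0, fun _ _ => 0) : (Fin d → ℝ) × (Fin n → Fin d → ℝ))
      = ∑ j : Fin d, (w0 j - wstar j)^2 := rfl
  have hcard : (Fintype.card (Fin (t+1) → Omega n d k) : ℝ)
      = (Fintype.card (Omega n d k) : ℝ)^(t+1) := by
    rw [Fintype.card_fun]
    push_cast
    simp
  have hcard0 : (0:ℝ) < (Fintype.card (Fin (t+1) → Omega n d k) : ℝ) := by
    exact_mod_cast Fintype.card_pos
  rw [div_le_iff₀ hcard0]
  have h1η : (0:ℝ) ≤ 1 - η := by linarith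
  have hfin : (Fintype.card (Omega n d k) : ℝ)^(t+1) * (1-η)^(t+1)
        * (Uq wstar ((w0, fun _ _ => 0) : (Fin d → ℝ) × (Fin n → Fin d → ℝ))
          + β * Gq e wstar ((w0, fun _ _ => 0) : (Fin d → ℝ) × (Fin n → Fin d → ℝ)))
      ≤ (1 - η) ^ (t + 1)
          * (∑ j : Fin d, (w0 j - wstar j) ^ 2
            + (1 / (n : ℝ)) * ∑ i : Fin n, ∑ j : Fin d, (wstar j - e i j) ^ 2)
          * (Fintype.card (Fin (t+1) → Omega n d k) : ℝ) := by
    rw [hcard, hU0eq, hG0eq]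
    set SU0 : ℝ := ∑ j : Fin d, (w0 j - wstar j)^2 with hSU0d
    set SG0 : ℝ := (1/(n:ℝ)) * ∑ i : Fin n, ∑ j : Fin d, (wstar j - e i j)^2 with hSG0d
    set CC : ℝ := (Fintype.card (Omega n d k) : ℝ)^(t+1) with hCCd
    set EE : ℝ := (1-η)^(t+1) with hEEd
    rw [hG0eq] at hG00
    have hb : β * SG0 ≤ SG0 := by
      have := mul_le_mul_of_nonneg_right hβ1 hG00
      linarith
    have hcc : (0:ℝ) ≤ CC * EE := by positivity
    calc CC * EE * (SU0 + β * SG0)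
        = CC * EE * SU0 + (CC * EE) * (β * SG0) := by ring
      _ ≤ CC * EE * SU0 + (CC * EE) * SG0 := by
          have := mul_le_mul_of_nonneg_left hb hcc
          linarith
      _ = EE * (SU0 + SG0) * CC := by ring
  calc ∑ ω : Fin (t+1) → Omega n d k,
        ∑ j : Fin d, ((proc e η w0
            (fun m => ω ⟨m % (t + 1), Nat.mod_lt m (Nat.succ_pos t)⟩) (t+1)).1 j - wstar j)^2
      = ∑ ω : Fin (t+1) → Omega n d k, Uq wstar (proc e η w0 (extend hne ω) (t+1)) := hS1
    _ ≤ ∑ ω : Fin (t+1) → Omega n d k,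
          (Uq wstar (proc e η w0 (extend hne ω) (t+1))
            + β * Gq e wstar (proc e η w0 (extend hne ω) (t+1))) := hS2
    _ ≤ (Fintype.card (Omega n d k) : ℝ)^(t+1) * (1-η)^(t+1)
          * (Uq wstar ((w0, fun _ _ => 0) : (Fin d → ℝ) × (Fin n → Fin d → ℝ))
            + β * Gq e wstar ((w0, fun _ _ => 0) : (Fin d → ℝ) × (Fin n → Fin d → ℝ))) := hmb
    _ ≤ _ := hfin
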